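/- For all Ω, λ ∈ ℝ, ξ ∈ ℝ² and E ∈ ℂ, det(H₊(ξ) − E·I₄) = det(H₊(ξ) + E·I₄); consequently the spectrum of H₊(ξ) is symmetric about 0: E is an eigenvalue of H₊(ξ) if and only if −E is. -/

import Mathlib

open Complex Matrix

/-- The Fourier-domain bulk Hamiltonian of gated twisted bilayer graphene with
AB stacking (valley `η = 1`). -/
noncomputable def Hplus (Ω lam : ℝ) (ξ : ℝ × ℝ) : Matrix (Fin 4) (Fin 4) ℂ :=
  !![(Ω : ℂ), (ξ.1 : ℂ) - (ξ.2 : ℂ) * I, 0, 0;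
     (ξ.1 : ℂ) + (ξ.2 : ℂ) * I, (Ω : ℂ), (lam : ℂ), 0;
     0, (lam : ℂ), -(Ω : ℂ), (ξ.1 : ℂ) - (ξ.2 : ℂ) * I;
     0, 0, (ξ.1 : ℂ) + (ξ.2 : ℂ) * I, -(Ω : ℂ)]

/-- `det(H₊(ξ) − E·I₄) = det(H₊(ξ) + E·I₄)` for every `E`; consequently the spectrum of
`H₊(ξ)` is symmetric about `0`: `E` is an eigenvalue iff `−E` is. -/
theorem charDet_Hplus_even (Ω lam : ℝ) (ξ : ℝ × ℝ) :
    (∀ E : ℂ, (Hplus Ω lam ξ - E • (1 : Matrix (Fin 4) (Fin 4) ℂ)).det =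
      (Hplus Ω lam ξ + E • (1 : Matrix (Fin 4) (Fin 4) ℂ)).det) ∧
    (∀ E : ℂ, E ∈ spectrum ℂ (Hplus Ω lam ξ) ↔ -E ∈ spectrum ℂ (Hplus Ω lam ξ)) := by
  have hdet : ∀ E : ℂ, (Hplus Ω lam ξ - E • (1 : Matrix (Fin 4) (Fin 4) ℂ)).det =
      (Hplus Ω lam ξ + E • (1 : Matrix (Fin 4) (Fin 4) ℂ)).det := by
    intro E
    rw [Matrix.det_succ_row_zero, Matrix.det_succ_row_zero]
    simp only [Fin.sum_univ_succ, Fin.sum_univ_zero, Matrix.det_fin_three]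
    simp [Hplus, Matrix.one_apply, Fin.succAbove, Fin.lt_def, Matrix.submatrix]
    ring
  refine ⟨hdet, fun E => ?_⟩
  have key : ∀ F : ℂ, F ∈ spectrum ℂ (Hplus Ω lam ξ) ↔
      (Hplus Ω lam ξ - F • (1 : Matrix (Fin 4) (Fin 4) ℂ)).det = 0 := by
    intro F
    rw [spectrum.mem_iff, Matrix.isUnit_iff_isUnit_det, isUnit_iff_ne_zero, not_ne_iff]
    have : algebraMap ℂ (Matrix (Fin 4) (Fin 4) ℂ) F - Hplus Ω lam ξ =
        -(Hplus Ω lam ξ - F • (1 : Matrix (Fin 4) (Fin 4) ℂ)) := by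
      rw [Algebra.algebraMap_eq_smul_one, neg_sub]
    rw [this, Matrix.det_neg]
    simp
  rw [key E, key (-E), hdet E]
  simp [sub_eq_add_neg]
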